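/- arXiv:2507.15421 — 4 statements merged into one kernel-verified Lean document; each statement's English description precedes it below -/
import Mathlib

section
/- Let t ∈ ℝ and for n ∈ ℕ, n ≥ 1, define ω_n = 2·arccos(cos²(t/(2n))). Then n·ω_n → √2·|t| as n → ∞. -/
open Real Filter

lemma ratio_tendsto {f : ℝ → ℝ} (hf : HasDerivAt f 1 0) (h0 : f 0 = 0) :
    Tendsto (fun u => f u / u) (nhdsWithin 0 {(0:ℝ)}ᶜ) (nhds 1) := by
  have := hasDerivAt_iff_tendsto_slope.1 hf
  refine this.congr' ?_
  filter_upwards [self_mem_nhdsWithin] with u hu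
  simp [slope, h0, div_eq_inv_mul]

/-- With `ω n = 2 arccos (cos²(t/(2n)))`, one has `n ω n → √2 |t|` as `n → ∞`. -/
theorem n_omega_tendsto (t : ℝ) (ω : ℕ → ℝ)
    (hω : ∀ n : ℕ, 1 ≤ n → ω n = 2 * Real.arccos ((Real.cos (t / (2 * n))) ^ 2)) :
    Tendsto (fun n : ℕ => (n : ℝ) * ω n) atTop (nhds (Real.sqrt 2 * |t|)) := by
  rcases eq_or_ne t 0 with rfl | ht
  · rw [abs_zero, mul_zero]
    apply Tendsto.congr' ?_ tendsto_const_nhds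
    filter_upwards [eventually_ge_atTop 1] with n hn
    rw [hω n hn]
    simp
  -- main case
  set x : ℕ → ℝ := fun n => t / (2 * n) with hxdef
  have hx0 : Tendsto x atTop (nhds 0) := by
    have h2n : Tendsto (fun n : ℕ => 2 * (n : ℝ)) atTop atTop :=
      (tendsto_natCast_atTop_atTop).const_mul_atTop two_pos
    simpa using Tendsto.div_atTop (tendsto_const_nhds (x := t)) h2n
  have hxne : ∀ n : ℕ, 1 ≤ n → x n ≠ 0 := by
    intro n hn
    have : (n : ℝ) ≠ 0 := Nat.cast_ne_zero.2 (by omega)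
    simp [hxdef, ht, this]
  -- eventually |x n| < 1, so sin (x n) ≠ 0
  have hsmall : ∀ᶠ n : ℕ in atTop, |x n| < 1 := by
    have := hx0 (Metric.ball_mem_nhds 0 one_pos)
    simpa [Real.dist_eq] using this
  have hsinne : ∀ᶠ n : ℕ in atTop, Real.sin (x n) ≠ 0 := by
    filter_upwards [hsmall, eventually_ge_atTop 1] with n hn hn1
    have hne := hxne n hn1
    rcases lt_or_gt_of_ne hne with h | h
    · have : Real.sin (x n) < 0 := by
        apply Real.sin_neg_of_neg_of_neg_pi_lt h
        nlinarith [abs_lt.1 hn, Real.pi_gt_three]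
      exact ne_of_lt this
    · have : 0 < Real.sin (x n) := by
        apply Real.sin_pos_of_pos_of_lt_pi h
        nlinarith [abs_lt.1 hn, Real.pi_gt_three]
      exact ne_of_gt this
  set u : ℕ → ℝ := fun n => Real.sqrt (1 - Real.cos (x n) ^ 4) with hudef
  have hu0 : Tendsto u atTop (nhds 0) := by
    have hc : Tendsto (fun n => Real.cos (x n)) atTop (nhds 1) := by
      simpa [Function.comp_def] using (Real.continuous_cos.continuousAt (x := 0)).tendsto.comp hx0
    have : Tendsto (fun n => Real.sqrt (1 - Real.cos (x n) ^ 4)) atTop (nhds (Real.sqrt (1 - 1 ^ 4))) := by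
      apply (Real.continuous_sqrt.tendsto _).comp
      exact (tendsto_const_nhds.sub (hc.pow 4))
    simpa using this
  have hune : ∀ᶠ n : ℕ in atTop, u n ≠ 0 := by
    filter_upwards [hsinne] with n hn
    have hcos : Real.cos (x n) ^ 4 < 1 := by
      have h1 : Real.cos (x n) ^ 2 < 1 := by
        have := Real.sin_sq_add_cos_sq (x n)
        nlinarith [pow_two_pos_of_ne_zero hn]
      nlinarith [sq_nonneg (Real.cos (x n))]
    have : 0 < u n := Real.sqrt_pos.2 (by linarith)
    exact ne_of_gt this
  -- arcsin ratio
  have harcsin : Tendsto (fun n => Real.arcsin (u n) / u n) atTop (nhds 1) := by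
    have hd : HasDerivAt Real.arcsin 1 0 := by
      have := Real.hasDerivAt_arcsin (x := 0) (by norm_num) (by norm_num)
      simpa using this
    have hratio := ratio_tendsto hd (by simp)
    exact hratio.comp (tendsto_nhdsWithin_iff.2 ⟨hu0, hune⟩)
  -- n * sin (x n) → t / 2
  have hnsin : Tendsto (fun n : ℕ => (n : ℝ) * Real.sin (x n)) atTop (nhds (t / 2)) := by
    have hd : HasDerivAt Real.sin 1 0 := by simpa using Real.hasDerivAt_sin 0
    have hratio := ratio_tendsto hd (by simp)
    have hxne' : ∀ᶠ n : ℕ in atTop, x n ≠ 0 := by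
      filter_upwards [eventually_ge_atTop 1] with n hn; exact hxne n hn
    have hcomp := hratio.comp (tendsto_nhdsWithin_iff.2 ⟨hx0, hxne'⟩)
    have : Tendsto (fun n : ℕ => Real.sin (x n) / x n * (t / 2)) atTop (nhds (1 * (t / 2))) :=
      hcomp.mul_const _
    apply this.congr' ?_ |>.mono_right (by rw [one_mul])
    filter_upwards [eventually_ge_atTop 1] with n hn
    have hne : (n : ℝ) ≠ 0 := Nat.cast_ne_zero.2 (by omega)
    have hxn : x n = t / (2 * n) := rfl
    rw [hxn]
    field_simp
  -- combine
  have hmain : Tendsto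
      (fun n : ℕ => 2 * (Real.arcsin (u n) / u n) *
        (|(n : ℝ) * Real.sin (x n)| * Real.sqrt (1 + Real.cos (x n) ^ 2)))
      atTop (nhds (Real.sqrt 2 * |t|)) := by
    have habs : Tendsto (fun n : ℕ => |(n : ℝ) * Real.sin (x n)|) atTop (nhds |t / 2|) :=
      hnsin.abs
    have hc : Tendsto (fun n => Real.cos (x n)) atTop (nhds 1) := by
      simpa [Function.comp_def] using (Real.continuous_cos.continuousAt (x := 0)).tendsto.comp hx0
    have hsq : Tendsto (fun n => Real.sqrt (1 + Real.cos (x n) ^ 2)) atTop (nhds (Real.sqrt 2)) := by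
      have : Tendsto (fun n => Real.sqrt (1 + Real.cos (x n) ^ 2)) atTop
          (nhds (Real.sqrt (1 + 1 ^ 2))) :=
        (Real.continuous_sqrt.tendsto _).comp (tendsto_const_nhds.add (hc.pow 2))
      norm_num at this
      exact this
    have := ((harcsin.const_mul 2).mul (habs.mul hsq))
    have heq : 2 * 1 * (|t / 2| * Real.sqrt 2) = Real.sqrt 2 * |t| := by
      rw [abs_div]
      norm_num
      ring
    rwa [heq] at this
  apply hmain.congr'
  filter_upwards [hune, eventually_ge_atTop 1, hsinne] with n hn hn1 hsn
  rw [hω n hn1]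
  have hcos2 : (0:ℝ) ≤ Real.cos (x n) ^ 2 := sq_nonneg _
  have harccos : Real.arccos (Real.cos (x n) ^ 2) = Real.arcsin (u n) := by
    rw [Real.arccos_eq_arcsin hcos2, hudef]
    ring_nf
  have hufact : u n = |Real.sin (x n)| * Real.sqrt (1 + Real.cos (x n) ^ 2) := by
    have h14 : (1:ℝ) - Real.cos (x n) ^ 4 = Real.sin (x n) ^ 2 * (1 + Real.cos (x n) ^ 2) := by
      have := Real.sin_sq_add_cos_sq (x n)
      nlinarith
    simp only [hudef]
    rw [h14, Real.sqrt_mul (sq_nonneg _), Real.sqrt_sq_eq_abs]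
  have hxnval : x n = t / (2 * n) := rfl
  have hnn : (0:ℝ) ≤ (n : ℝ) := Nat.cast_nonneg n
  rw [abs_mul, abs_of_nonneg hnn]
  -- goal: 2 * (arcsin (u n) / u n) * (n * |sin| * √(1+cos²)) = n * (2 * arccos (cos² (t/(2n))))
  rw [harccos]
  rw [show (n:ℝ) * |Real.sin (x n)| * Real.sqrt (1 + Real.cos (x n) ^ 2) = (n:ℝ) * u n by
    rw [hufact]; ring]
  field_simp
end

section
/- For every ℓ ∈ ℕ and every β ∈ ℝ, the Legendre polynomial satisfies P_ℓ(cos β) ≤ (1 + ℓ(ℓ+1) sin²β)^{−1/4}. -/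
/-- The Legendre polynomials, defined by the standard three-term recurrence,
normalized so that `legendre ℓ 1 = 1`. -/
noncomputable def legendre : ℕ → ℝ → ℝ
  | 0, _ => 1
  | 1, x => x
  | n + 2, x =>
      ((2 * n + 3) * x * legendre (n + 1) x - (n + 1) * legendre n x) / (n + 2)

open Polynomial


noncomputable def LP : ℕ → Polynomial ℝ
  | 0 => 1
  | 1 => X
  | n + 2 => C ((2 * (n:ℝ) + 3) / ((n:ℝ) + 2)) * (X * LP (n + 1))
      - C (((n:ℝ) + 1) / ((n:ℝ) + 2)) * LP n


lemma LP_rec (n : ℕ) :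
    (C (n:ℝ) + 2) * LP (n + 2)
      = (2 * C (n:ℝ) + 3) * (X * LP (n + 1)) - (C (n:ℝ) + 1) * LP n := by
  have h2 : ((n:ℝ) + 2) ≠ 0 := by positivity
  have e1 : (C (n:ℝ) + 2) * C ((2 * (n:ℝ) + 3) / ((n:ℝ) + 2)) = 2 * C (n:ℝ) + 3 := by
    rw [show C (n:ℝ) + 2 = C ((n:ℝ) + 2) by simp [map_ofNat], ← C_mul, mul_div_cancel₀ _ h2]; simp [map_ofNat]
  have e2 : (C (n:ℝ) + 2) * C (((n:ℝ) + 1) / ((n:ℝ) + 2)) = C (n:ℝ) + 1 := by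
    rw [show C (n:ℝ) + 2 = C ((n:ℝ) + 2) by simp [map_ofNat], ← C_mul, mul_div_cancel₀ _ h2]; simp [map_ofNat]
  rw [show LP (n+2) = C ((2 * (n:ℝ) + 3) / ((n:ℝ) + 2)) * (X * LP (n + 1))
      - C (((n:ℝ) + 1) / ((n:ℝ) + 2)) * LP n from rfl]
  linear_combination (X * LP (n+1)) * e1 - (LP n) * e2

lemma C_ne0 (n : ℕ) : (C (n:ℝ) + 2) ≠ 0 := by
  rw [show C (n:ℝ) + 2 = C ((n:ℝ) + 2) by simp [map_ofNat]]
  exact C_ne_zero.mpr (by positivity)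

lemma LP_deriv_pair (n : ℕ) :
    derivative (LP (n + 1)) = X * derivative (LP n) + (C (n:ℝ) + 1) * LP n ∧
    X * derivative (LP (n + 1)) = derivative (LP n) + (C (n:ℝ) + 1) * LP (n + 1) := by
  induction n with
  | zero => constructor <;> simp [LP]
  | succ n ih =>
    obtain ⟨ih1, ih2⟩ := ih
    have hrec := LP_rec n
    have hd := congrArg derivative hrec
    simp only [derivative_mul, derivative_sub, derivative_add, derivative_C,
      derivative_X, derivative_ofNat, derivative_one, zero_mul, zero_add, add_zero,
      mul_one, one_mul, mul_zero] at hd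
    have h0 := C_ne0 n
    constructor
    · refine mul_left_cancel₀ h0 ?_
      push_cast
      simp only [C_add, C_1]
      linear_combination hd + (C (n:ℝ) + 1) * ih2
    · refine mul_left_cancel₀ h0 ?_
      push_cast
      simp only [C_add, C_1]
      linear_combination X * hd - (C (n:ℝ) + 2) * hrec
        + (2 * C (n:ℝ) + 3) * X * ih2 - (C (n:ℝ) + 2) * ih1

lemma LP_star (n : ℕ) :
    (1 - X^2) * derivative (LP (n + 1)) = (C (n:ℝ) + 1) * (LP n - X * LP (n + 1)) := by
  obtain ⟨ih1, ih2⟩ := LP_deriv_pair n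
  linear_combination ih1 - X * ih2

lemma LP_ode (n : ℕ) :
    (1 - X^2) * derivative (derivative (LP n)) - 2 * X * derivative (LP n)
      = - (C (n:ℝ) * (C (n:ℝ) + 1)) * LP n := by
  cases n with
  | zero => simp [LP]
  | succ n =>
    obtain ⟨ih1, ih2⟩ := LP_deriv_pair n
    have hs := congrArg derivative (LP_star n)
    simp only [derivative_mul, derivative_sub, derivative_add, derivative_C,
      derivative_X, derivative_one, derivative_X_pow, zero_mul, zero_add, add_zero,
      mul_one, one_mul, mul_zero, zero_sub, Nat.cast_ofNat, pow_one, map_ofNat] at hs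
    push_cast
    simp only [C_add, C_1]
    linear_combination hs - (C (n:ℝ) + 1) * ih2

lemma LP_eval_one : ∀ n : ℕ, (LP n).eval 1 = 1
  | 0 => by simp [LP]
  | 1 => by simp [LP]
  | (n+2) => by
    have h := congrArg (eval 1) (LP_rec n)
    have e0 := LP_eval_one n
    have e1 := LP_eval_one (n+1)
    simp only [eval_mul, eval_add, eval_sub, eval_C, eval_X, eval_ofNat, eval_one,
      e0, e1, mul_one] at h
    have h2 : ((n:ℝ) + 2) ≠ 0 := by positivity
    apply mul_left_cancel₀ h2
    linear_combination h

lemma LP_parity (n : ℕ) (x : ℝ) :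
    (LP n).eval (-x) = (-1)^n * (LP n).eval x := by
  induction n using Nat.strong_induction_on with
  | _ n ih =>
    match n with
    | 0 => simp [LP]
    | 1 => simp [LP]
    | (n+2) =>
      have hA := congrArg (eval (-x)) (LP_rec n)
      have hB := congrArg (eval x) (LP_rec n)
      have e0 := ih n (by omega)
      have e1 := ih (n+1) (by omega)
      simp only [eval_mul, eval_add, eval_sub, eval_C, eval_X, eval_ofNat, eval_one,
        e0, e1] at hA hB
      have h2 : ((n:ℝ) + 2) ≠ 0 := by positivity
      have hpow : ((-1:ℝ))^(n+2) = (-1)^n := by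
        rw [pow_add]; norm_num
      have hpow1 : ((-1:ℝ))^(n+1) = -(-1)^n := by
        rw [pow_add]; norm_num
      rw [hpow]
      apply mul_left_cancel₀ h2
      rw [hA]
      rw [hpow1] at *
      linear_combination (-(-1:ℝ)^n) * hB

lemma legendre_eq : ∀ (n : ℕ) (x : ℝ), legendre n x = (LP n).eval x
  | 0, x => by simp [legendre, LP]
  | 1, x => by simp [legendre, LP]
  | (n+2), x => by
    have e0 := legendre_eq n x
    have e1 := legendre_eq (n+1) x
    have h := congrArg (eval x) (LP_rec n)
    simp only [eval_mul, eval_add, eval_sub, eval_C, eval_X, eval_ofNat, eval_one] at h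
    have h2 : ((n:ℝ) + 2) ≠ 0 := by positivity
    simp only [legendre, e0, e1]
    push_cast
    rw [div_eq_iff h2]
    linear_combination -h


set_option maxHeartbeats 2000000 in
lemma legendre_key_bound (lam : ℝ) (hlam : 2 ≤ lam) (p : Polynomial ℝ)
    (hode : ∀ y : ℝ, (1 - y^2) * (derivative (derivative p)).eval y
        - 2 * y * (derivative p).eval y = - lam * p.eval y)
    (h1 : p.eval 1 = 1) :
    ∀ x : ℝ, 0 ≤ x → x ≤ 1 → (p.eval x)^4 * (1 + lam * (1 - x^2)) ≤ 1 := by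
  intro x hx0 hx1
  set P : ℝ → ℝ := fun y => p.eval y with hPdef
  set P1 : ℝ → ℝ := fun y => (derivative p).eval y with hP1def
  set P2 : ℝ → ℝ := fun y => (derivative (derivative p)).eval y with hP2def
  set w : ℝ → ℝ := fun y => 1 + lam * (1 - y^2) with hwdef
  set S : ℝ → ℝ := fun y => w y * P1 y - (lam * y / 2) * P y with hSdef
  set R : ℝ → ℝ := fun y => lam * (lam + 3/2) * w y + (5/4) * lam^2 * y^2 with hRdef
  set G : ℝ → ℝ := fun y => (P y)^2 + (S y)^2 / R y with hGdef
  set H : ℝ → ℝ := fun y => w y * (G y)^2 with hHdef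
  have hw : ∀ y : ℝ, -1 ≤ y → y ≤ 1 → 1 ≤ w y := by
    intro y h h'
    have hy2 : 0 ≤ 1 - y^2 := by nlinarith [mul_nonneg (by linarith : (0:ℝ) ≤ 1 - y) (by linarith : (0:ℝ) ≤ 1 + y)]
    have : 0 ≤ lam * (1 - y^2) := mul_nonneg (by linarith) hy2
    simp only [hwdef]; linarith
  have hR : ∀ y : ℝ, -1 ≤ y → y ≤ 1 → 0 < R y := by
    intro y h h'
    have h2 := hw y h h'
    have h3 : 0 < lam * (lam + 3/2) := by nlinarith
    have h4 := mul_le_mul_of_nonneg_left h2 h3.le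
    simp only [hRdef]; nlinarith [sq_nonneg (lam*y)]
  have hG : ∀ y : ℝ, -1 ≤ y → y ≤ 1 → 0 ≤ G y := by
    intro y h h'
    have := div_nonneg (sq_nonneg (S y)) (hR y h h').le
    simp only [hGdef]
    positivity
  -- derivative building blocks
  have hderH : ∀ y : ℝ, R y ≠ 0 → HasDerivAt H
      ((-(2*lam*y)) * (G y)^2 + w y * (2 * G y *
        (2 * P y * P1 y + ((2 * S y * ((-(2*lam*y)) * P1 y + w y * P2 y
            - (lam/2) * P y - (lam*y/2) * P1 y)) * R y
          - (S y)^2 * (lam*(lam+3/2)*(-(2*lam*y)) + (5/2)*lam^2*y)) / (R y)^2))) y := by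
    intro y hRy
    have hP : HasDerivAt P (P1 y) y := p.hasDerivAt y
    have hP1 : HasDerivAt P1 (P2 y) y := (derivative p).hasDerivAt y
    have hw' : HasDerivAt w (-(2*lam*y)) y := by
      have h := (((hasDerivAt_pow 2 y).const_sub 1).const_mul lam).const_add 1
      refine h.congr_deriv ?_
      push_cast; ring
    have hS' : HasDerivAt S ((-(2*lam*y)) * P1 y + w y * P2 y
        - (lam/2) * P y - (lam*y/2) * P1 y) y := by
      have h1' : HasDerivAt (fun z => w z * P1 z) ((-(2*lam*y)) * P1 y + w y * P2 y) y :=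
        hw'.mul hP1
      have h2' : HasDerivAt (fun z => (lam * z / 2) * P z)
          ((lam/2) * P y + (lam*y/2) * P1 y) y := by
        have hid : HasDerivAt (fun z : ℝ => lam * z / 2) (lam/2) y := by
          simpa using ((hasDerivAt_id y).const_mul lam).div_const 2
        have := hid.mul hP
        refine this.congr_deriv ?_; ring
      have := h1'.sub h2'
      refine this.congr_deriv ?_; ring
    have hR' : HasDerivAt R (lam*(lam+3/2)*(-(2*lam*y)) + (5/2)*lam^2*y) y := by
      have hsq : HasDerivAt (fun z : ℝ => (5/4) * lam^2 * z^2) ((5/4)*lam^2*(2*y^1)) y :=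
        (hasDerivAt_pow 2 y).const_mul ((5/4) * lam^2)
      have := (hw'.const_mul (lam*(lam+3/2))).add hsq
      refine this.congr_deriv ?_; ring
    have hG' : HasDerivAt G (2 * P y * P1 y + ((2 * S y * ((-(2*lam*y)) * P1 y + w y * P2 y
            - (lam/2) * P y - (lam*y/2) * P1 y)) * R y
          - (S y)^2 * (lam*(lam+3/2)*(-(2*lam*y)) + (5/2)*lam^2*y)) / (R y)^2) y := by
      have hsq : HasDerivAt (fun z => (P z)^2) (2 * P y * P1 y) y := by
        have := (hP.pow 2); refine this.congr_deriv ?_; push_cast; ring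
      have hSsq : HasDerivAt (fun z => (S z)^2) (2 * S y * ((-(2*lam*y)) * P1 y + w y * P2 y
            - (lam/2) * P y - (lam*y/2) * P1 y)) y := by
        have := (hS'.pow 2); refine this.congr_deriv ?_; push_cast; ring
      exact hsq.add (hSsq.div hR' hRy)
    have := hw'.mul (hG'.pow 2)
    refine this.congr_deriv ?_; simp only [Pi.pow_apply]; push_cast; ring
  -- monotonicity of H on [0,1]
  have hcont : ContinuousOn H (Set.Icc 0 1) := by
    intro y hy
    obtain ⟨hy0, hy1⟩ := hy
    exact ((hderH y (hR y (by linarith) hy1).ne').continuousAt).continuousWithinAt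
  have hdiff : DifferentiableOn ℝ H (interior (Set.Icc (0:ℝ) 1)) := by
    rw [interior_Icc]
    intro y hy
    exact ((hderH y (hR y (by linarith [hy.1]) hy.2.le).ne').differentiableAt).differentiableWithinAt
  have hderiv_nonneg : ∀ y ∈ interior (Set.Icc (0:ℝ) 1), 0 ≤ deriv H y := by
    rw [interior_Icc]
    intro y hy
    obtain ⟨hy0, hy1⟩ := hy
    have hRy := hR y (by linarith) hy1.le
    have h1y : (1 : ℝ) - y^2 ≠ 0 := by nlinarith
    rw [(hderH y hRy.ne').deriv]
    have hP2y : P2 y = (2*y*P1 y - lam*P y)/(1-y^2) := by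
      rw [eq_div_iff h1y]
      have := hode y
      simp only [hPdef, hP1def, hP2def]
      linarith [this]
    have hid : (-(2*lam*y)) * (G y)^2 + w y * (2 * G y *
        (2 * P y * P1 y + ((2 * S y * ((-(2*lam*y)) * P1 y + w y * P2 y
            - (lam/2) * P y - (lam*y/2) * P1 y)) * R y
          - (S y)^2 * (lam*(lam+3/2)*(-(2*lam*y)) + (5/2)*lam^2*y)) / (R y)^2))
        = 2 * y * (6*lam + 9*lam^2 + (3/2)*lam^2*(lam-1)*(1-y^2)) * (S y)^2 * G y
            / ((1-y^2) * (R y)^2) := by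
      rw [hP2y]
      simp only [hGdef]
      field_simp [hRy.ne', h1y]
      simp only [hSdef, hRdef, hwdef]
      ring
    rw [hid]
    have e1 : (0:ℝ) ≤ 1 - y^2 := by nlinarith
    have e2 : (0:ℝ) ≤ 3/2*lam^2*(lam-1)*(1-y^2) :=
      mul_nonneg (mul_nonneg (by positivity) (by linarith)) e1
    have hK : 0 ≤ 6*lam + 9*lam^2 + (3/2)*lam^2*(lam-1)*(1-y^2) := by nlinarith
    have hGy := hG y (by linarith) hy1.le
    apply div_nonneg
    · exact mul_nonneg (mul_nonneg (mul_nonneg (by linarith : (0:ℝ) ≤ 2*y) hK) (sq_nonneg _)) hGy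
    · exact mul_nonneg e1 (sq_nonneg _)
  have hmono : MonotoneOn H (Set.Icc 0 1) :=
    monotoneOn_of_deriv_nonneg (convex_Icc 0 1) hcont hdiff hderiv_nonneg
  -- endpoint values
  have hP1one : P1 1 = lam / 2 := by
    have h := hode 1
    norm_num [h1] at h
    simp only [hP1def]
    linarith
  have hH1 : H 1 = 1 := by
    have hw1 : w 1 = 1 := by simp [hwdef]
    have hS1 : S 1 = 0 := by
      simp only [hSdef, hw1, hP1one, hPdef, h1]
      ring
    have hG1 : G 1 = 1 := by
      simp only [hGdef, hS1, hPdef, h1]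
      norm_num
    simp [hHdef, hw1, hG1]
  have hHx : H x ≤ 1 := by
    rw [← hH1]
    exact hmono ⟨hx0, hx1⟩ ⟨by norm_num, le_refl 1⟩ hx1
  -- conclude
  have hwx := hw x (by linarith) hx1
  have hGx := hG x (by linarith) hx1
  have hPG : (P x)^2 ≤ G x := by
    have := div_nonneg (sq_nonneg (S x)) (hR x (by linarith) hx1).le
    simp only [hGdef]; linarith
  have : (P x)^4 * w x ≤ H x := by
    simp only [hHdef]
    have h4 : (P x)^4 = ((P x)^2)^2 := by ring
    rw [h4]
    have := mul_le_mul_of_nonneg_left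
      (pow_le_pow_left₀ (sq_nonneg (P x)) hPG 2) (by linarith : (0:ℝ) ≤ w x)
    linarith
  calc (p.eval x)^4 * (1 + lam * (1 - x^2)) = (P x)^4 * w x := by simp [hPdef, hwdef]
    _ ≤ H x := this
    _ ≤ 1 := hHx

/-- For every `ℓ ∈ ℕ` and every `β ∈ ℝ`,
`P_ℓ(cos β) ≤ (1 + ℓ(ℓ+1) sin²β)^{-1/4}`. -/
theorem legendre_cos_upper_bound (ℓ : ℕ) (β : ℝ) :
    legendre ℓ (Real.cos β) ≤
      (1 + (ℓ : ℝ) * (ℓ + 1) * Real.sin β ^ 2) ^ (-(1 : ℝ) / 4) := by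
  have hsin : Real.sin β ^ 2 = 1 - Real.cos β ^ 2 := by
    have := Real.sin_sq_add_cos_sq β; linarith
  rw [legendre_eq, hsin]
  set lam : ℝ := (ℓ : ℝ) * ((ℓ:ℝ) + 1) with hlamdef
  set x := Real.cos β with hxdef
  have hx1 : |x| ≤ 1 := Real.abs_cos_le_one β
  have hxl := (abs_le.mp hx1).1
  have hxr := (abs_le.mp hx1).2
  have hlam0 : 0 ≤ lam := by positivity
  have hx2 : 0 ≤ 1 - x^2 := by nlinarith
  have hw0 : (0:ℝ) < 1 + lam * (1 - x^2) := by nlinarith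
  rcases Nat.eq_zero_or_pos ℓ with h0 | hpos
  · subst h0
    simp only [LP, eval_one, Nat.cast_zero, zero_mul, zero_add, zero_mul, mul_zero]
    norm_num
  · have hlam2 : 2 ≤ lam := by
      have h1 : (1:ℝ) ≤ (ℓ:ℝ) := by exact_mod_cast hpos
      nlinarith
    have hode' : ∀ y : ℝ, (1 - y^2) * (derivative (derivative (LP ℓ))).eval y
        - 2*y*(derivative (LP ℓ)).eval y = - lam * (LP ℓ).eval y := by
      intro y
      have h := congrArg (eval y) (LP_ode ℓ)
      simp only [eval_mul, eval_sub, eval_add, eval_C, eval_X, eval_pow, eval_one,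
        eval_neg, eval_ofNat] at h
      rw [hlamdef]
      linarith [h]
    have hkey := legendre_key_bound lam hlam2 (LP ℓ) hode' (LP_eval_one ℓ) |x| (abs_nonneg x) hx1
    have h4 : (eval x (LP ℓ))^4 * (1 + lam * (1 - x^2)) ≤ 1 := by
      rcases le_or_gt 0 x with h | h
      · rwa [abs_of_nonneg h] at hkey
      · rw [abs_of_neg h] at hkey
        have hp : eval (-x) (LP ℓ) = (-1)^ℓ * eval x (LP ℓ) := LP_parity ℓ x
        rw [hp] at hkey
        have hpow : ((-1:ℝ)^ℓ * eval x (LP ℓ))^4 = (eval x (LP ℓ))^4 := by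
          rw [mul_pow, ← pow_mul, mul_comm ℓ 4, pow_mul]
          norm_num [Real.rpow_neg_one]
        rw [hpow] at hkey
        have : (-x)^2 = x^2 := by ring
        rwa [this] at hkey
    -- rpow conclusion
    have habs : |eval x (LP ℓ)| ≤ (1 + lam * (1 - x^2)) ^ (-(1:ℝ)/4) := by
      apply le_of_pow_le_pow_left₀ (n := 4) (by norm_num)
        (Real.rpow_nonneg hw0.le _)
      have hrw : ((1 + lam * (1 - x^2)) ^ (-(1:ℝ)/4))^4 = (1 + lam * (1 - x^2))⁻¹ := by
        rw [← Real.rpow_natCast ((1 + lam * (1 - x^2)) ^ (-(1:ℝ)/4)) 4,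
          ← Real.rpow_mul hw0.le]
        norm_num [Real.rpow_neg_one]
      rw [hrw]
      have habs4 : |eval x (LP ℓ)|^4 = (eval x (LP ℓ))^4 := by
        rw [← abs_pow]
        exact abs_of_nonneg (by positivity)
      rw [habs4, ← one_div]
      rw [le_div_iff₀ hw0]
      exact h4
    exact le_trans (le_abs_self _) habs
end

section
/- Let γ ∈ (0,2) and suppose (a_ℓ)_{ℓ≥1} are nonnegative reals with a_ℓ ≥ C ℓ^{−(1+γ)} for all sufficiently large ℓ, for some C > 0. Let β_n ~ c/n with c > 0 and define η_n² = ∑_{ℓ≥1} (1 − (cos(β_n/2))^{2ℓ})² a_ℓ. Then η_n = Ω(n^{−γ}) as n → ∞. -/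
open Real Filter

/-- Key rpow algebra lemma. -/
lemma rpow_calc (u m γ : ℝ) (hu : 0 < u) (hm : 0 < m) :
    (m * u ^ 2) * (2 * (m * u ^ 2)) ^ (-(1 + γ)) =
      2 ^ (-(1 + γ)) * m ^ (-γ) * ((u ^ (-γ)) ^ 2) := by
  have hu2 : (0:ℝ) < u ^ 2 := by positivity
  rw [show (2 * (m * u ^ 2)) = 2 * m * (u^2) by ring,
    Real.mul_rpow (by positivity) hu2.le, Real.mul_rpow (by norm_num) hm.le]
  rw [← Real.rpow_natCast u 2, ← Real.rpow_mul hu.le,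
    ← Real.rpow_natCast (u ^ (-γ)) 2, ← Real.rpow_mul hu.le]
  have h1 : m * m ^ (-(1+γ)) = m ^ (-γ) := by
    nth_rewrite 1 [show m = m ^ (1:ℝ) by rw [Real.rpow_one]]
    rw [← Real.rpow_add hm]; norm_num
  have h2 : u ^ ((2:ℕ):ℝ) * u ^ (((2:ℕ):ℝ) * -(1+γ)) = u ^ (-γ * (2:ℕ)) := by
    rw [← Real.rpow_add hu]; congr 1; push_cast; ring
  calc (m * u ^ ((2:ℕ):ℝ)) * (2 ^ (-(1+γ)) * m ^ (-(1+γ)) * u ^ (((2:ℕ):ℝ) * -(1+γ)))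
      = 2 ^ (-(1+γ)) * (m * m ^ (-(1+γ))) *
        (u ^ ((2:ℕ):ℝ) * u ^ (((2:ℕ):ℝ) * -(1+γ))) := by ring
    _ = 2 ^ (-(1+γ)) * m ^ (-γ) * u ^ (-γ * (2:ℕ)) := by rw [h1, h2]

set_option maxHeartbeats 1000000 in
/-- Let `γ ∈ (0,2)`, `(a_ℓ)` nonnegative and summable with `a_ℓ ≥ C ℓ^{-(1+γ)}` for
large `ℓ`, and `β_n ~ c/n` with `c > 0`.  If
`η_n² = ∑_{ℓ≥1} (1 - cos(β_n/2)^{2ℓ})² a_ℓ`, then `η_n = Ω(n^{-γ})`. -/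
theorem eigenvector_lower_bound (γ c C : ℝ)
    (hγ : γ ∈ Set.Ioo (0 : ℝ) 2) (hc : 0 < c) (hC : 0 < C)
    (a : ℕ → ℝ) (ha0 : ∀ ℓ, 0 ≤ a ℓ) (hasum : Summable a)
    (halow : ∀ᶠ ℓ : ℕ in atTop, C * (ℓ : ℝ) ^ (-(1 + γ)) ≤ a ℓ)
    (β : ℕ → ℝ)
    (hβ : Tendsto (fun n : ℕ => β n / (c / n)) atTop (nhds 1)) :
    ∃ K > 0, ∀ᶠ n : ℕ in atTop,
      K * (n : ℝ) ^ (-γ) ≤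
        Real.sqrt
          (∑' ℓ : ℕ, (1 - Real.cos (β n / 2) ^ (2 * (ℓ + 1))) ^ 2 * a (ℓ + 1)) := by
  obtain ⟨hγ0, hγ2⟩ := hγ
  have hπ := Real.pi_gt_three
  set M : ℕ := ⌈4 * π ^ 2 * Real.log 2 / c ^ 2⌉₊ + 1 with hMdef
  have hMpos : 0 < M := Nat.succ_pos _
  have hMge : 4 * π ^ 2 * Real.log 2 / c ^ 2 ≤ (M : ℝ) := by
    calc 4 * π ^ 2 * Real.log 2 / c ^ 2 ≤ (⌈4 * π ^ 2 * Real.log 2 / c ^ 2⌉₊ : ℝ) :=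
          Nat.le_ceil _
      _ ≤ (M : ℝ) := by rw [hMdef]; push_cast; linarith
  clear hMdef
  clear_value M
  set D : ℝ := C / 4 * (2 : ℝ) ^ (-(1 + γ)) * (M : ℝ) ^ (-γ) with hDdef
  have hDpos : 0 < D := by
    have h2 : (0:ℝ) < (2 : ℝ) ^ (-(1 + γ)) := Real.rpow_pos_of_pos (by norm_num) _
    have hM' : (0:ℝ) < (M : ℝ) ^ (-γ) :=
      Real.rpow_pos_of_pos (by exact_mod_cast hMpos) _
    positivity
  refine ⟨Real.sqrt D, Real.sqrt_pos.mpr hDpos, ?_⟩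
  -- eventualities from hβ
  have hlo : ∀ᶠ n : ℕ in atTop, (1/2 : ℝ) ≤ β n / (c / n) :=
    hβ.eventually (tendsto_id.eventually_const_le (by norm_num))
  have hhi : ∀ᶠ n : ℕ in atTop, β n / (c / n) ≤ 2 :=
    hβ.eventually (tendsto_id.eventually_le_const (by norm_num))
  obtain ⟨N₀, hN₀⟩ := eventually_atTop.mp halow
  filter_upwards [hlo, hhi, eventually_ge_atTop 1, eventually_ge_atTop N₀,
    eventually_ge_atTop ⌈c⌉₊, eventually_ge_atTop 1] with n hn1 hn2 hn3 hn4 hn5 _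
  have hnpos : (0:ℝ) < n := by exact_mod_cast hn3
  have hcn : (0:ℝ) < c / n := div_pos hc hnpos
  have hβlo : c / n * (1/2) ≤ β n := by
    have := (le_div_iff₀ hcn).mp hn1; linarith
  have hβhi : β n ≤ 2 * (c / n) := by
    have := (div_le_iff₀ hcn).mp hn2; linarith
  have hcn1 : c / n ≤ 1 := by
    rw [div_le_one hnpos]
    calc c ≤ (⌈c⌉₊ : ℝ) := Nat.le_ceil c
      _ ≤ (n : ℝ) := by exact_mod_cast hn5
  set x : ℝ := β n / 2 with hxdef
  have hx0 : 0 < x := by rw [hxdef]; linarith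
  have hx1 : x ≤ 1 := by rw [hxdef]; linarith
  have hxlo : c / (4 * n) ≤ x := by
    have h4 : c / ↑n ≤ 2 * β n := by linarith
    have h5 : c ≤ 2 * β n * ↑n := by rwa [div_le_iff₀ hnpos] at h4
    rw [hxdef, div_le_iff₀ (by positivity : (0:ℝ) < 4 * (n:ℝ))]
    have e : β n / 2 * (4 * (n:ℝ)) = 2 * β n * ↑n := by ring
    linarith
  clear_value x
  set L : ℕ := M * n ^ 2 with hLdef
  have hLpos : 0 < L := by positivity
  have hLn : n ≤ L := by
    rw [hLdef]
    calc n ≤ n ^ 2 := Nat.le_self_pow (by norm_num) n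
      _ ≤ M * n ^ 2 := Nat.le_mul_of_pos_left _ hMpos
  clear_value L
  -- cos bounds
  have hcos0 : 0 ≤ Real.cos x :=
    Real.cos_nonneg_of_mem_Icc ⟨by linarith, by linarith⟩
  have hcosq : Real.cos x ≤ 1 - 2 / π ^ 2 * x ^ 2 :=
    Real.cos_le_one_sub_mul_cos_sq (by rw [abs_of_pos hx0]; linarith)
  have hbase0 : 0 ≤ 1 - 2 / π ^ 2 * x ^ 2 := by
    have hπ2 : (9:ℝ) ≤ π ^ 2 := by nlinarith
    have : 2 / π ^ 2 * x ^ 2 ≤ 2 / 9 := by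
      have h1 : 2 / π ^ 2 ≤ 2 / 9 := by
        apply div_le_div_of_nonneg_left (by norm_num) (by norm_num) hπ2
      nlinarith [sq_nonneg x, hx0.le, hx1]
    linarith
  -- key : for ℓ ≥ L, cos x ^ (2ℓ) ≤ 1/2
  have hkey : ∀ ℓ : ℕ, L ≤ ℓ → Real.cos x ^ (2 * ℓ) ≤ 1 / 2 := by
    intro ℓ hℓ
    have step1 : Real.cos x ^ (2 * ℓ) ≤ Real.cos x ^ (2 * L) :=
      pow_le_pow_of_le_one hcos0 (Real.cos_le_one x) (by omega)
    have step2 : Real.cos x ^ (2 * L) ≤ (1 - 2 / π ^ 2 * x ^ 2) ^ (2 * L) :=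
      pow_le_pow_left₀ hcos0 hcosq _
    have step3 : (1 - 2 / π ^ 2 * x ^ 2) ^ (2 * L) ≤
        Real.exp (-(2 / π ^ 2 * x ^ 2)) ^ (2 * L) := by
      apply pow_le_pow_left₀ hbase0
      linarith [Real.add_one_le_exp (-(2 / π ^ 2 * x ^ 2))]
    have step4 : Real.exp (-(2 / π ^ 2 * x ^ 2)) ^ (2 * L) ≤ 1 / 2 := by
      rw [← Real.exp_nat_mul]
      have hx2 : c ^ 2 / (16 * (n:ℝ) ^ 2) ≤ x ^ 2 := by
        have h := mul_self_le_mul_self (by positivity : (0:ℝ) ≤ c / (4 * n)) hxlo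
        calc c ^ 2 / (16 * (n:ℝ) ^ 2) = (c / (4 * n)) * (c / (4 * n)) := by
              field_simp; ring
          _ ≤ x * x := h
          _ = x ^ 2 := (sq x).symm
      have hLcast : ((2 * L : ℕ) : ℝ) = 2 * M * (n:ℝ) ^ 2 := by
        rw [hLdef]; push_cast; ring
      have hexp : ((2 * L : ℕ) : ℝ) * -(2 / π ^ 2 * x ^ 2) ≤ -(Real.log 2) := by
        rw [hLcast]
        have hπpos : (0:ℝ) < π ^ 2 := by positivity
        have hMc : 4 * π ^ 2 * Real.log 2 ≤ (M:ℝ) * c ^ 2 := by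
          have := (div_le_iff₀ (by positivity : (0:ℝ) < c ^ 2)).mp hMge
          linarith
        have key2 : Real.log 2 ≤ 2 * M * (n:ℝ) ^ 2 * (2 / π ^ 2 * x ^ 2) := by
          have h1 : 2 * (M:ℝ) * (n:ℝ) ^ 2 * (2 / π ^ 2 * (c ^ 2 / (16 * (n:ℝ) ^ 2)))
              = (M:ℝ) * c ^ 2 / (4 * π ^ 2) := by
            field_simp; ring
          have h2 : (M:ℝ) * c ^ 2 / (4 * π ^ 2) ≥ Real.log 2 := by
            rw [ge_iff_le, le_div_iff₀ (by positivity)]; linarith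
          have h3 : 2 * (M:ℝ) * (n:ℝ) ^ 2 * (2 / π ^ 2 * (c ^ 2 / (16 * (n:ℝ) ^ 2)))
              ≤ 2 * (M:ℝ) * (n:ℝ) ^ 2 * (2 / π ^ 2 * x ^ 2) := by
            apply mul_le_mul_of_nonneg_left _ (by positivity)
            apply mul_le_mul_of_nonneg_left hx2 (by positivity)
          linarith
        linarith
      calc Real.exp (((2 * L : ℕ) : ℝ) * -(2 / π ^ 2 * x ^ 2))
          ≤ Real.exp (-(Real.log 2)) := Real.exp_le_exp.mpr hexp
        _ = 1 / 2 := by rw [Real.exp_neg, Real.exp_log (by norm_num)]; norm_num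
    linarith
  -- summability of the series
  set g : ℕ → ℝ := fun j => (1 - Real.cos (β n / 2) ^ (2 * (j + 1))) ^ 2 * a (j + 1)
    with hgdef
  have hg0 : ∀ j, 0 ≤ g j := fun j => mul_nonneg (sq_nonneg _) (ha0 _)
  have hgsum : Summable g := by
    apply Summable.of_nonneg_of_le hg0 (fun j => ?_) ((summable_nat_add_iff 1).mpr hasum)
    have ht0 : 0 ≤ Real.cos (β n / 2) ^ (2 * (j + 1)) := by
      rw [pow_mul]; positivity
    have ht1 : Real.cos (β n / 2) ^ (2 * (j + 1)) ≤ 1 := by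
      rw [pow_mul]
      exact pow_le_one₀ (sq_nonneg _) (Real.cos_sq_le_one _)
    calc g j = (1 - Real.cos (β n / 2) ^ (2 * (j + 1))) ^ 2 * a (j + 1) := rfl
      _ ≤ 1 * a (j + 1) := by
          apply mul_le_mul_of_nonneg_right _ (ha0 _)
          exact pow_le_one₀ (by linarith) (by linarith)
      _ = a (j + 1) := one_mul _
  -- per-term lower bound on Ico L (2L)
  have hterm : ∀ j ∈ Finset.Ico L (2 * L),
      C / 4 * ((2 * L : ℕ) : ℝ) ^ (-(1 + γ)) ≤ g j := by
    intro j hj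
    rw [Finset.mem_Ico] at hj
    obtain ⟨hjL, hj2L⟩ := hj
    have hcosj : Real.cos x ^ (2 * (j + 1)) ≤ 1 / 2 := hkey (j + 1) (by omega)
    have hsq : (1/4 : ℝ) ≤ (1 - Real.cos (β n / 2) ^ (2 * (j + 1))) ^ 2 := by
      have : (1/2 : ℝ) ≤ 1 - Real.cos (β n / 2) ^ (2 * (j + 1)) := by
        rw [hxdef] at hcosj; linarith
      calc (1/4 : ℝ) = (1/2 : ℝ) ^ 2 := by norm_num
        _ ≤ _ := pow_le_pow_left₀ (by norm_num) this 2
    have haj : C * ((2 * L : ℕ) : ℝ) ^ (-(1 + γ)) ≤ a (j + 1) := by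
      have h1 : C * ((j + 1 : ℕ) : ℝ) ^ (-(1 + γ)) ≤ a (j + 1) := by
        apply hN₀; omega
      have h2 : ((2 * L : ℕ) : ℝ) ^ (-(1 + γ)) ≤ ((j + 1 : ℕ) : ℝ) ^ (-(1 + γ)) := by
        apply Real.rpow_le_rpow_of_nonpos
        · exact_mod_cast Nat.succ_pos j
        · exact_mod_cast (by omega : j + 1 ≤ 2 * L)
        · linarith
      calc C * ((2 * L : ℕ) : ℝ) ^ (-(1 + γ))
          ≤ C * ((j + 1 : ℕ) : ℝ) ^ (-(1 + γ)) :=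
            mul_le_mul_of_nonneg_left h2 hC.le
        _ ≤ a (j + 1) := h1
    have hrp : (0:ℝ) ≤ ((2 * L : ℕ) : ℝ) ^ (-(1 + γ)) :=
      Real.rpow_nonneg (by positivity) _
    calc C / 4 * ((2 * L : ℕ) : ℝ) ^ (-(1 + γ))
        = (1/4) * (C * ((2 * L : ℕ) : ℝ) ^ (-(1 + γ))) := by ring
      _ ≤ (1 - Real.cos (β n / 2) ^ (2 * (j + 1))) ^ 2 * a (j + 1) := by
          apply mul_le_mul hsq haj (by positivity) (sq_nonneg _)
  -- sum lower bound
  have hsumlb : (L : ℝ) * (C / 4 * ((2 * L : ℕ) : ℝ) ^ (-(1 + γ))) ≤ ∑' j, g j := by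
    calc (L : ℝ) * (C / 4 * ((2 * L : ℕ) : ℝ) ^ (-(1 + γ)))
        = ∑ _j ∈ Finset.Ico L (2 * L), C / 4 * ((2 * L : ℕ) : ℝ) ^ (-(1 + γ)) := by
          rw [Finset.sum_const, Nat.card_Ico]
          rw [show 2 * L - L = L by omega, nsmul_eq_mul]
      _ ≤ ∑ j ∈ Finset.Ico L (2 * L), g j := Finset.sum_le_sum hterm
      _ ≤ ∑' j, g j := Summable.sum_le_tsum _ (fun i _ => hg0 i) hgsum
  -- rpow algebra
  have hLcast : ((L : ℕ) : ℝ) = (M : ℝ) * (n : ℝ) ^ 2 := by rw [hLdef]; push_cast; ring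
  have h2Lcast : ((2 * L : ℕ) : ℝ) = 2 * ((M : ℝ) * (n : ℝ) ^ 2) := by
    rw [hLdef]; push_cast; ring
  have halg : (L : ℝ) * (C / 4 * ((2 * L : ℕ) : ℝ) ^ (-(1 + γ)))
      = D * ((n : ℝ) ^ (-γ)) ^ 2 := by
    rw [hLcast, h2Lcast, hDdef]
    have := rpow_calc (n : ℝ) (M : ℝ) γ hnpos (by exact_mod_cast hMpos)
    calc (M : ℝ) * (n : ℝ) ^ 2 * (C / 4 * (2 * ((M : ℝ) * (n : ℝ) ^ 2)) ^ (-(1 + γ)))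
        = C / 4 * ((M : ℝ) * (n : ℝ) ^ 2 * (2 * ((M : ℝ) * (n : ℝ) ^ 2)) ^ (-(1 + γ))) := by
          ring
      _ = C / 4 * (2 ^ (-(1 + γ)) * (M : ℝ) ^ (-γ) * ((n : ℝ) ^ (-γ)) ^ 2) := by rw [this]
      _ = C / 4 * 2 ^ (-(1 + γ)) * (M : ℝ) ^ (-γ) * ((n : ℝ) ^ (-γ)) ^ 2 := by ring
  -- conclude
  have hfinal : D * ((n : ℝ) ^ (-γ)) ^ 2 ≤ ∑' j, g j := by rw [← halg]; exact hsumlb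
  have hnr : 0 ≤ (n : ℝ) ^ (-γ) := Real.rpow_nonneg hnpos.le _
  rw [hxdef]
  calc Real.sqrt D * (n : ℝ) ^ (-γ)
      = Real.sqrt (D * ((n : ℝ) ^ (-γ)) ^ 2) := by
        rw [Real.sqrt_mul hDpos.le, Real.sqrt_sq hnr]
    _ ≤ Real.sqrt (∑' j, g j) := Real.sqrt_le_sqrt hfinal
end

section
/- Let ψ : S² → ℝ be smooth away from the equator and, in coordinates x = φ−π ∈ [−ε,ε], y = θ−π/2 ∈ [−ε,ε], equal to ψ = (1 + e^{−x/|y|})^{−1} for y ≠ 0. Then ∂ψ/∂φ is not square-integrable near the equator: ∫∫_{D'} (e^{−x/y}/(1+e^{−x/y})²)² y^{−2} dx dy = +∞, where D' = {(x,y) ∈ [0,ε]² : x ≤ y}. -/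
open MeasureTheory Real Set
open scoped ENNReal

/-- The `φ`-derivative of the wave-function `ψ = (1 + e^{-x/|y|})⁻¹` (in coordinates
`x = φ - π`, `y = θ - π/2`) is not square-integrable near the equator:
`∫∫_{D'} (e^{-x/y}/(1+e^{-x/y})²)² y⁻² dx dy = +∞` on `D' = {(x,y) ∈ [0,ε]² : x ≤ y}`. -/
theorem dphi_not_square_integrable (ε : ℝ) (hε : 0 < ε) (hε' : ε < Real.pi / 2) :
    ∫⁻ p in {p : ℝ × ℝ | p.1 ∈ Icc 0 ε ∧ p.2 ∈ Icc 0 ε ∧ p.1 ≤ p.2},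
        ENNReal.ofReal
          ((Real.exp (-p.1 / p.2) / (1 + Real.exp (-p.1 / p.2)) ^ 2) ^ 2 / p.2 ^ 2)
      = ⊤ := by
  set c : ℝ := (Real.exp (-1) / 4) ^ 2 with hc
  have hc0 : 0 < c := by positivity
  set S : Set (ℝ × ℝ) := {p : ℝ × ℝ | p.1 ∈ Icc 0 ε ∧ p.2 ∈ Icc 0 ε ∧ p.1 ≤ p.2} with hS
  have hSmeas : MeasurableSet S :=
    (measurableSet_Icc.preimage measurable_fst).inter
      ((measurableSet_Icc.preimage measurable_snd).inter
        (measurableSet_le measurable_fst measurable_snd))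
  -- the simpler lower-bound integrand
  have hfm : Measurable fun p : ℝ × ℝ => ENNReal.ofReal (c / p.2 ^ 2) :=
    ENNReal.measurable_ofReal.comp (measurable_const.div (measurable_snd.pow measurable_const))
  -- ∫ 1/y near 0 diverges
  have hinv : ∫⁻ y in Ioo (0:ℝ) ε, ENNReal.ofReal y⁻¹ = ⊤ := by
    by_contra h
    have hint : IntegrableOn (fun y : ℝ => y⁻¹) (Ioo 0 ε) := by
      refine ⟨measurable_inv.aestronglyMeasurable, ?_⟩
      rw [hasFiniteIntegral_iff_ofReal ?_]
      · exact lt_top_iff_ne_top.2 h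
      · filter_upwards [self_mem_ae_restrict measurableSet_Ioo] with y hy
        exact inv_nonneg.2 hy.1.le
    have hii : IntervalIntegrable (fun y : ℝ => y⁻¹) volume 0 ε := by
      rw [intervalIntegrable_iff_integrableOn_Ioo_of_le hε.le]
      exact hint
    rw [intervalIntegrable_inv_iff] at hii
    rcases hii with h1 | h1
    · exact hε.ne h1
    · exact h1 Set.left_mem_uIcc
  have hinvc : ∫⁻ y in Ioo (0:ℝ) ε, ENNReal.ofReal (c / y) = ⊤ := by
    have heq : ∀ y : ℝ, ENNReal.ofReal (c / y) = ENNReal.ofReal c * ENNReal.ofReal y⁻¹ := by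
      intro y
      rw [div_eq_mul_inv, ENNReal.ofReal_mul hc0.le]
    simp_rw [heq]
    rw [lintegral_const_mul _ measurable_inv.ennreal_ofReal, hinv,
      ENNReal.mul_top (by simpa using hc0)]
  -- the key computation: the integral of the lower bound is infinite
  have key : ∫⁻ p in S, ENNReal.ofReal (c / p.2 ^ 2) = ⊤ := by
    rw [← lintegral_indicator hSmeas, Measure.volume_eq_prod,
      lintegral_prod_symm _ (hfm.indicator hSmeas).aemeasurable]
    have hOuter : ∀ y ∈ Ioo (0:ℝ) ε,
        (∫⁻ x, S.indicator (fun p : ℝ × ℝ => ENNReal.ofReal (c / p.2 ^ 2)) (x, y)) =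
          ENNReal.ofReal (c / y) := by
      intro y hy
      have hsec : ∀ x, S.indicator (fun p : ℝ × ℝ => ENNReal.ofReal (c / p.2 ^ 2)) (x, y)
          = (Icc 0 y).indicator (fun _ => ENNReal.ofReal (c / y ^ 2)) x := by
        intro x
        by_cases hx : x ∈ Icc 0 y
        · rw [indicator_of_mem _ _, indicator_of_mem hx]
          exact ⟨⟨hx.1, hx.2.trans hy.2.le⟩, ⟨hy.1.le, hy.2.le⟩, hx.2⟩
        · rw [indicator_of_notMem _ _, indicator_of_notMem hx]
          intro hmem
          exact hx ⟨hmem.1.1, hmem.2.2⟩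
      simp_rw [hsec]
      rw [lintegral_indicator measurableSet_Icc, setLIntegral_const, Real.volume_Icc, sub_zero,
        ← ENNReal.ofReal_mul (by positivity)]
      congr 1
      have hy0 : y ≠ 0 := hy.1.ne'
      field_simp
    rw [eq_top_iff]
    calc (⊤ : ℝ≥0∞) = ∫⁻ y in Ioo (0:ℝ) ε, ENNReal.ofReal (c / y) := hinvc.symm
      _ = ∫⁻ y in Ioo (0:ℝ) ε,
            ∫⁻ x, S.indicator (fun p : ℝ × ℝ => ENNReal.ofReal (c / p.2 ^ 2)) (x, y) :=
          (setLIntegral_congr_fun measurableSet_Ioo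
            (fun y hy => (hOuter y hy).symm))
      _ ≤ _ := setLIntegral_le_lintegral _ _
  rw [eq_top_iff]
  calc (⊤ : ℝ≥0∞) = ∫⁻ p in S, ENNReal.ofReal (c / p.2 ^ 2) := key.symm
    _ ≤ _ := by
      refine setLIntegral_mono' hSmeas fun p hp => ?_
      obtain ⟨⟨hx0, hxε⟩, ⟨hy0, hyε⟩, hxy⟩ := hp
      apply ENNReal.ofReal_le_ofReal
      rcases eq_or_lt_of_le hy0 with h0 | h0
      · simp [← h0]
      · have ht1 : p.1 / p.2 ≤ 1 := (div_le_one h0).2 hxy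
        have ht0 : 0 ≤ p.1 / p.2 := div_nonneg hx0 h0.le
        have he1 : Real.exp (-1) ≤ Real.exp (-p.1 / p.2) := by
          rw [neg_div]; exact Real.exp_le_exp.2 (by linarith)
        have he2 : Real.exp (-p.1 / p.2) ≤ 1 := by
          rw [neg_div]; exact Real.exp_le_one_iff.2 (by linarith)
        have hF : Real.exp (-1) / 4 ≤
            Real.exp (-p.1 / p.2) / (1 + Real.exp (-p.1 / p.2)) ^ 2 := by
          have hd1 : (0:ℝ) < (1 + Real.exp (-p.1 / p.2)) ^ 2 := by positivity
          have hd2 : (1 + Real.exp (-p.1 / p.2)) ^ 2 ≤ 4 := by nlinarith [Real.exp_pos (-p.1 / p.2)]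
          exact div_le_div₀ (Real.exp_pos _).le he1 hd1 hd2
        have hcF : c ≤ (Real.exp (-p.1 / p.2) / (1 + Real.exp (-p.1 / p.2)) ^ 2) ^ 2 := by
          rw [hc]
          exact pow_le_pow_left₀ (by positivity) hF 2
        exact div_le_div_of_nonneg_right hcF (by positivity) |>.trans_eq rfl
end
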